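/- Let q > 2 and let v ∈ C¹(ℝ²; ℝ²) with ∇v ∈ L^q(ℝ²). Then for every ε > 0 there exists R > 0 such that |v(x)| ≤ ε |x|^{1−2/q} for all |x| ≥ R; in other words, sup_{|x|=r} |v(x)| = o(r^{1−2/q}) as r → ∞. -/

import Mathlib

set_option maxHeartbeats 1000000

open Real MeasureTheory Metric Set Filter

noncomputable section
local notation "E2" => EuclideanSpace ℝ (Fin 2)


-- FTC segment bound
lemma ftc_bound {v : E2 → E2} (hv : ContDiff ℝ 1 v) (y w : E2) :
    ENNReal.ofReal ‖v y - v w‖ ≤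
      ∫⁻ t in Set.Ioc (0:ℝ) 1,
        ENNReal.ofReal (‖fderiv ℝ v (y + t • (w - y))‖ * ‖w - y‖) := by
  set γ : ℝ → E2 := fun t => y + t • (w - y) with hγ
  have hγc : Continuous γ := by continuity
  have hfc : Continuous fun t => ‖fderiv ℝ v (γ t)‖ * ‖w - y‖ :=
    (((hv.continuous_fderiv one_ne_zero).comp hγc).norm).mul continuous_const
  have hderiv : ∀ t ∈ Set.uIcc (0:ℝ) 1,
      HasDerivAt (fun t => v (γ t)) ((fderiv ℝ v (γ t)) (w - y)) t := by
    intro t _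
    have h1 : HasDerivAt γ (w - y) t := by
      simpa [hγ] using ((hasDerivAt_id t).smul_const (w - y)).const_add y
    have h2 := (hv.differentiable one_ne_zero (γ t)).hasFDerivAt
    exact h2.comp_hasDerivAt t h1
  have hint : IntervalIntegrable (fun t => (fderiv ℝ v (γ t)) (w - y)) volume 0 1 :=
    (((hv.continuous_fderiv one_ne_zero).comp hγc).clm_apply continuous_const).intervalIntegrable 0 1
  have heq : v (γ 1) - v (γ 0) = ∫ t in (0:ℝ)..1, (fderiv ℝ v (γ t)) (w - y) :=
    (intervalIntegral.integral_eq_sub_of_hasDerivAt hderiv hint).symm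
  have h0 : γ 0 = y := by simp [hγ]
  have h1 : γ 1 = w := by simp [hγ]
  have hnorm : ‖v y - v w‖ ≤ ∫ t in (0:ℝ)..1, ‖fderiv ℝ v (γ t)‖ * ‖w - y‖ := by
    rw [h0, h1] at heq
    rw [← norm_neg, neg_sub, heq]
    calc ‖∫ t in (0:ℝ)..1, (fderiv ℝ v (γ t)) (w - y)‖
        ≤ ∫ t in (0:ℝ)..1, ‖(fderiv ℝ v (γ t)) (w - y)‖ :=
          intervalIntegral.norm_integral_le_integral_norm zero_le_one
      _ ≤ ∫ t in (0:ℝ)..1, ‖fderiv ℝ v (γ t)‖ * ‖w - y‖ := by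
          apply intervalIntegral.integral_mono_on zero_le_one
            (hint.norm) (hfc.intervalIntegrable 0 1)
          intro t _
          exact ContinuousLinearMap.le_opNorm _ _
  have hset : (∫ t in (0:ℝ)..1, ‖fderiv ℝ v (γ t)‖ * ‖w - y‖)
      = ∫ t in Set.Ioc (0:ℝ) 1, ‖fderiv ℝ v (γ t)‖ * ‖w - y‖ := by
    rw [intervalIntegral.integral_of_le zero_le_one]
  calc ENNReal.ofReal ‖v y - v w‖
      ≤ ENNReal.ofReal (∫ t in Set.Ioc (0:ℝ) 1, ‖fderiv ℝ v (γ t)‖ * ‖w - y‖) := by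
        rw [← hset]; exact ENNReal.ofReal_le_ofReal hnorm
    _ ≤ _ := by
        rw [ofReal_integral_eq_lintegral_ofReal
          (hfc.integrableOn_Ioc) (Eventually.of_forall fun t => by positivity)]

lemma scaling {g : E2 → ENNReal} (hg : Measurable g) {t : ℝ} (ht : 0 < t)
    (a c : E2) (ρ : ℝ) :
    ∫⁻ w in ball c ρ, g (a + t • w) ∂volume
      = ENNReal.ofReal ((t ^ 2)⁻¹) * ∫⁻ u in ball (a + t • c) (t * ρ), g u ∂volume := by
  set φ : E2 → E2 := fun w => a + t • w with hφ
  have hφm : Measurable φ := by fun_prop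
  have hpre : φ ⁻¹' (ball (a + t • c) (t * ρ)) = ball c ρ := by
    ext w
    simp only [hφ, mem_preimage, mem_ball, dist_eq_norm]
    constructor
    · intro h
      have : a + t • w - (a + t • c) = t • (w - c) := by
        rw [smul_sub]; abel
      rw [this, norm_smul, Real.norm_eq_abs, abs_of_pos ht] at h
      nlinarith [norm_nonneg (w - c)]
    · intro h
      have : a + t • w - (a + t • c) = t • (w - c) := by
        rw [smul_sub]; abel
      rw [this, norm_smul, Real.norm_eq_abs, abs_of_pos ht]
      nlinarith
  have hmap : Measure.map φ volume
      = ENNReal.ofReal ((t ^ 2)⁻¹) • (volume : Measure E2) := by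
    have : φ = (fun u => a + u) ∘ (fun w : E2 => t • w) := rfl
    rw [this, ← Measure.map_map (by fun_prop) (by fun_prop)]
    rw [show (fun w : E2 => t • w) = (t • ·) from rfl,
      Measure.map_addHaar_smul volume ht.ne']
    rw [Measure.map_smul]
    congr 1
    · rw [finrank_euclideanSpace_fin, abs_of_pos (by positivity)]
    · exact map_add_left_eq_self volume a
  have hGm : Measurable ((ball (a + t • c) (t * ρ)).indicator g) :=
    hg.indicator measurableSet_ball
  calc ∫⁻ w in ball c ρ, g (φ w) ∂volume
      = ∫⁻ w, ((ball (a + t • c) (t * ρ)).indicator g) (φ w) ∂volume := by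
        rw [← lintegral_indicator measurableSet_ball _]
        congr 1
        ext w
        rw [← hpre, ← Set.indicator_comp_right φ]
        rfl
    _ = ∫⁻ u, ((ball (a + t • c) (t * ρ)).indicator g) u ∂(Measure.map φ volume) :=
        (lintegral_map hGm hφm).symm
    _ = ENNReal.ofReal ((t ^ 2)⁻¹) * ∫⁻ u in ball (a + t • c) (t * ρ), g u ∂volume := by
        rw [hmap, lintegral_smul_measure, lintegral_indicator measurableSet_ball _, smul_eq_mul]

lemma holder_set {g : E2 → ENNReal} (hg : Measurable g) {q : ℝ} (hq : 2 < q)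
    (s : Set E2) :
    ∫⁻ u in s, g u ∂volume
      ≤ (∫⁻ u in s, g u ^ q ∂volume) ^ (1/q) * (volume s) ^ (1 - 1/q) := by
  have hq1 : 1 < q := by linarith
  have hpq : q.HolderConjugate (q / (q - 1)) := Real.HolderConjugate.conjExponent hq1
  have h := ENNReal.lintegral_mul_le_Lp_mul_Lq (volume.restrict s) hpq
    (hg.aemeasurable) (aemeasurable_const (b := (1 : ENNReal)))
  simp only [Pi.mul_apply, mul_one, ENNReal.one_rpow, lintegral_const,
    Measure.restrict_apply_univ, one_mul] at h
  have hexp : 1 / (q / (q - 1)) = 1 - 1/q := by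
    field_simp
  rw [hexp] at h
  exact h

lemma tint {q : ℝ} (hq : 2 < q) :
    ∫⁻ t in Set.Ioc (0:ℝ) 1, ENNReal.ofReal (t ^ (-(2/q))) = ENNReal.ofReal (q / (q - 2)) := by
  have hr : (-1 : ℝ) < -(2/q) := by
    rw [neg_lt_neg_iff]
    rw [div_lt_one (by linarith)]
    linarith
  have hint : IntegrableOn (fun t : ℝ => t ^ (-(2/q))) (Set.Ioc (0:ℝ) 1) volume :=
    (intervalIntegral.intervalIntegrable_rpow' hr).1
  rw [← ofReal_integral_eq_lintegral_ofReal hint ?_]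
  · congr 1
    rw [← intervalIntegral.integral_of_le zero_le_one]
    rw [integral_rpow (Or.inl hr)]
    rw [Real.one_rpow, Real.zero_rpow (by linarith : (0:ℝ) < -(2/q) + 1).ne']
    field_simp
    ring
  · filter_upwards [ae_restrict_mem measurableSet_Ioc] with t ht
    exact Real.rpow_nonneg ht.1.le _

lemma leg {q : ℝ} (hq : 2 < q) {v : E2 → E2} (hv : ContDiff ℝ 1 v)
    {A : Set E2} {ρ : ℝ} (hρ : 0 < ρ) (y c : E2)
    (hball : ∀ t ∈ Set.Ioc (0:ℝ) 1, ball (y + t • (c - y)) (t * ρ) ⊆ A) :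
    ∫⁻ w in ball c ρ, ENNReal.ofReal ‖v y - v w‖ ∂volume ≤
      ENNReal.ofReal (‖c - y‖ + ρ) *
        ((∫⁻ u in A, ENNReal.ofReal ‖fderiv ℝ v u‖ ^ q ∂volume) ^ (1/q) *
          (volume (ball (0:E2) 1)) ^ (1 - 1/q) *
          ENNReal.ofReal (ρ ^ (2 - 2/q) * (q / (q - 2)))) := by
  set g : E2 → ENNReal := fun u => ENNReal.ofReal ‖fderiv ℝ v u‖ with hg
  have hgc : Continuous g :=
    ENNReal.continuous_ofReal.comp (hv.continuous_fderiv one_ne_zero).norm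
  have hgm : Measurable g := hgc.measurable
  set T : ENNReal := ∫⁻ u in A, g u ^ q ∂volume with hT
  set V : ENNReal := volume (ball (0:E2) 1) with hV
  set K : ℝ := ‖c - y‖ + ρ with hK
  have hK0 : 0 ≤ K := by positivity
  have hexp0 : (0:ℝ) ≤ 1 - 1/q := by
    have h1 : 1/q ≤ 1/2 := by
      apply one_div_le_one_div_of_le <;> linarith
    linarith
  set F : ℝ → E2 → ENNReal := fun t w => g (y + t • (w - y)) with hF
  have hFc : Continuous (Function.uncurry F) := by
    apply hgc.comp
    exact continuous_const.add ((continuous_fst).smul (continuous_snd.sub continuous_const))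
  -- pointwise bound
  have h1 : ∀ w ∈ ball c ρ, ENNReal.ofReal ‖v y - v w‖ ≤
      ∫⁻ t in Set.Ioc (0:ℝ) 1, F t w * ENNReal.ofReal K := by
    intro w hw
    refine (ftc_bound hv y w).trans (lintegral_mono fun t => ?_)
    rw [ENNReal.ofReal_mul (norm_nonneg _)]
    refine mul_le_mul_right (ENNReal.ofReal_le_ofReal ?_) _
    calc ‖w - y‖ = ‖(w - c) + (c - y)‖ := by abel_nf
      _ ≤ ‖w - c‖ + ‖c - y‖ := norm_add_le _ _
      _ ≤ K := by
          rw [hK]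
          have : ‖w - c‖ < ρ := by rw [← dist_eq_norm]; exact mem_ball.mp hw
          linarith
  -- integrate over the ball and swap
  have h2 : ∫⁻ w in ball c ρ, ENNReal.ofReal ‖v y - v w‖ ∂volume ≤
      ∫⁻ t in Set.Ioc (0:ℝ) 1, (∫⁻ w in ball c ρ, F t w ∂volume) * ENNReal.ofReal K := by
    have hmeas : Measurable fun w => ∫⁻ t in Set.Ioc (0:ℝ) 1, F t w * ENNReal.ofReal K := by
      apply Measurable.lintegral_prod_right (f := fun w t => F t w * ENNReal.ofReal K)
      exact ((hFc.comp continuous_swap).measurable).mul measurable_const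
    refine (setLIntegral_mono hmeas h1).trans ?_
    rw [lintegral_lintegral_swap]
    · apply lintegral_mono_ae
      filter_upwards with t
      exact le_of_eq
        (lintegral_mul_const'' _ ((hFc.comp (Continuous.prodMk_right t)).measurable).aemeasurable)
    · exact (((hFc.comp continuous_swap).measurable).mul measurable_const).aemeasurable
  -- per-t bound
  have h3 : ∀ t ∈ Set.Ioc (0:ℝ) 1, (∫⁻ w in ball c ρ, F t w ∂volume) ≤
      T ^ (1/q) * V ^ (1 - 1/q) * ENNReal.ofReal (t ^ (-(2/q)) * ρ ^ (2 - 2/q)) := by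
    intro t ht
    have ht0 : 0 < t := ht.1
    have hrw : ∀ w : E2, y + t • (w - y) = (y - t • y) + t • w := by
      intro w; rw [smul_sub]; abel
    have hcenter : (y - t • y) + t • c = y + t • (c - y) := by
      rw [smul_sub]; abel
    calc (∫⁻ w in ball c ρ, F t w ∂volume)
        = ∫⁻ w in ball c ρ, g ((y - t • y) + t • w) ∂volume := by
          apply setLIntegral_congr_fun measurableSet_ball
          exact fun w _ => by rw [hF]; simp only; rw [hrw w]
      _ = ENNReal.ofReal ((t ^ 2)⁻¹) *
            ∫⁻ u in ball (y + t • (c - y)) (t * ρ), g u ∂volume := by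
          rw [scaling hgm ht0, hcenter]
      _ ≤ ENNReal.ofReal ((t ^ 2)⁻¹) *
            ((∫⁻ u in ball (y + t • (c - y)) (t * ρ), g u ^ q ∂volume) ^ (1/q) *
              (volume (ball (y + t • (c - y)) (t * ρ))) ^ (1 - 1/q)) :=
          mul_le_mul_right (holder_set hgm hq _) _
      _ ≤ ENNReal.ofReal ((t ^ 2)⁻¹) *
            (T ^ (1/q) * (ENNReal.ofReal ((t * ρ) ^ 2) * V) ^ (1 - 1/q)) := by
          refine mul_le_mul_right (mul_le_mul' ?_ ?_) _
          · exact ENNReal.rpow_le_rpow (lintegral_mono_set (hball t ht)) (by positivity)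
          · refine ENNReal.rpow_le_rpow (le_of_eq ?_) (by nlinarith [hq])
            rw [Measure.addHaar_ball _ _ (by positivity : (0:ℝ) ≤ t * ρ),
              finrank_euclideanSpace_fin]
      _ = T ^ (1/q) * V ^ (1 - 1/q) * ENNReal.ofReal (t ^ (-(2/q)) * ρ ^ (2 - 2/q)) := by
          rw [ENNReal.mul_rpow_of_nonneg _ _ hexp0]
          have hkey : ENNReal.ofReal ((t ^ 2)⁻¹) * ENNReal.ofReal ((t * ρ) ^ 2) ^ (1 - 1/q)
              = ENNReal.ofReal (t ^ (-(2/q)) * ρ ^ (2 - 2/q)) := by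
            rw [ENNReal.ofReal_rpow_of_pos (by positivity)]
            rw [← ENNReal.ofReal_mul (by positivity)]
            congr 1
            have e : ((t : ℝ)^2)⁻¹ = t ^ (-2 : ℝ) := by
              rw [← Real.rpow_natCast t 2, ← Real.rpow_neg ht0.le]
              norm_num
            have e2 : (((t*ρ)^2 : ℝ)) ^ (1 - 1/q) = t ^ (2 - 2/q) * ρ ^ (2 - 2/q) := by
              rw [← Real.rpow_natCast (t*ρ) 2, ← Real.rpow_mul (by positivity),
                Real.mul_rpow ht0.le hρ.le]
              norm_num [mul_sub]
              rw [div_eq_mul_inv]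
            have e3 : t ^ (-2:ℝ) * t ^ (2 - 2/q) = t ^ (-(2/q)) := by
              rw [← Real.rpow_add ht0]
              ring_nf
            rw [e, e2, ← mul_assoc, e3]
          calc ENNReal.ofReal ((t ^ 2)⁻¹) *
                (T ^ (1/q) * (ENNReal.ofReal ((t * ρ) ^ 2) ^ (1 - 1/q) * V ^ (1 - 1/q)))
              = T ^ (1/q) * V ^ (1 - 1/q) *
                  (ENNReal.ofReal ((t ^ 2)⁻¹) * ENNReal.ofReal ((t * ρ) ^ 2) ^ (1 - 1/q)) := by
                ring
            _ = _ := by rw [hkey]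
  -- final integration in t
  calc ∫⁻ w in ball c ρ, ENNReal.ofReal ‖v y - v w‖ ∂volume
      ≤ ∫⁻ t in Set.Ioc (0:ℝ) 1, (∫⁻ w in ball c ρ, F t w ∂volume) * ENNReal.ofReal K := h2
    _ ≤ ∫⁻ t in Set.Ioc (0:ℝ) 1,
          (T ^ (1/q) * V ^ (1 - 1/q) * ENNReal.ofReal (ρ ^ (2 - 2/q)) * ENNReal.ofReal K) *
            ENNReal.ofReal (t ^ (-(2/q))) := by
        apply setLIntegral_mono_ae' measurableSet_Ioc
        filter_upwards with t ht
        refine (mul_le_mul_left (h3 t ht) _).trans (le_of_eq ?_)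
        rw [ENNReal.ofReal_mul (Real.rpow_nonneg ht.1.le _)]
        ring
    _ = (T ^ (1/q) * V ^ (1 - 1/q) * ENNReal.ofReal (ρ ^ (2 - 2/q)) * ENNReal.ofReal K) *
          ENNReal.ofReal (q / (q - 2)) := by
        rw [lintegral_const_mul'' _ ?_, tint hq]
        exact (ENNReal.measurable_ofReal.comp (measurable_id.pow measurable_const)).aemeasurable
    _ = _ := by
        rw [ENNReal.ofReal_mul (Real.rpow_nonneg hρ.le _)]
        ring

theorem stmt8 (q : ℝ) (hq : 2 < q)
    (v : EuclideanSpace ℝ (Fin 2) → EuclideanSpace ℝ (Fin 2))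
    (hv : ContDiff ℝ 1 v)
    (hlq : MemLp (fun x => fderiv ℝ v x) (ENNReal.ofReal q) volume) :
    ∀ ε > 0, ∃ R > 0, ∀ x : EuclideanSpace ℝ (Fin 2),
      R ≤ ‖x‖ → ‖v x‖ ≤ ε * ‖x‖ ^ (1 - 2 / q) := by
  intro ε hε
  have hq0 : (0:ℝ) < q := by linarith
  have hq20 : (0:ℝ) < q - 2 := by linarith
  have hexp : (0:ℝ) < 1 - 2/q := by
    have : 2/q < 1 := by rw [div_lt_one hq0]; linarith
    linarith
  have hV0 : volume (ball (0:E2) 1) ≠ 0 := (measure_ball_pos _ _ one_pos).ne'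
  have hVtop : volume (ball (0:E2) 1) ≠ ⊤ := measure_ball_lt_top.ne
  -- total integral finite
  have hTot : (∫⁻ u, ENNReal.ofReal ‖fderiv ℝ v u‖ ^ q ∂volume) < ⊤ := by
    have h := lintegral_rpow_enorm_lt_top_of_eLpNorm_lt_top
      (p := ENNReal.ofReal q) (f := fun x => fderiv ℝ v x)
      (by simp [ENNReal.ofReal_eq_zero]; linarith) ENNReal.ofReal_ne_top hlq.2
    rw [ENNReal.toReal_ofReal hq0.le] at h
    simpa only [← ofReal_norm_eq_enorm] using h
  -- constants
  have hCq0 : (0:ℝ) < q / (q - 2) := by positivity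
  set δ : ℝ := ε / 2 / (4 * (q / (q - 2))) with hδdef
  have hδ : 0 < δ := by positivity
  have hη0 : (0:ENNReal) < ENNReal.ofReal (δ ^ q) * volume (ball (0:E2) 1) := by
    apply ENNReal.mul_pos _ hV0
    simp only [ne_eq, ENNReal.ofReal_eq_zero, not_le]
    positivity
  -- tail smallness
  obtain ⟨n, hn⟩ : ∃ n : ℕ, (∫⁻ u in {u : E2 | (n:ℝ) ≤ ‖u‖},
      ENNReal.ofReal ‖fderiv ℝ v u‖ ^ q ∂volume)
      < ENNReal.ofReal (δ ^ q) * volume (ball (0:E2) 1) := by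
    set ν : Measure E2 := volume.withDensity
      (fun u => ENNReal.ofReal ‖fderiv ℝ v u‖ ^ q) with hν
    have hSm : ∀ m : ℕ, MeasurableSet {u : E2 | (m:ℝ) ≤ ‖u‖} := fun m =>
      (isClosed_le continuous_const continuous_norm).measurableSet
    have hmono : Antitone fun m : ℕ => {u : E2 | (m:ℝ) ≤ ‖u‖} := by
      intro a b hab u hu
      simp only [mem_setOf_eq] at hu ⊢
      exact le_trans (by exact_mod_cast Nat.cast_le.mpr hab) hu
    have hiInter : ⋂ m : ℕ, {u : E2 | (m:ℝ) ≤ ‖u‖} = ∅ := by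
      ext u
      simp only [mem_iInter, mem_setOf_eq, mem_empty_iff_false, iff_false, not_forall, not_le]
      exact exists_nat_gt ‖u‖
    have hfin : ∀ m : ℕ, ν {u : E2 | (m:ℝ) ≤ ‖u‖} ≠ ⊤ := by
      intro m
      rw [hν, withDensity_apply _ (hSm m)]
      exact ((lintegral_mono_set (subset_univ _)).trans_lt
        (by rwa [Measure.restrict_univ])).ne
    have htends := tendsto_measure_iInter_atTop (μ := ν)
      (fun m => (hSm m).nullMeasurableSet) hmono ⟨0, hfin 0⟩
    rw [hiInter, measure_empty] at htends
    obtain ⟨m, hm⟩ := (htends.eventually_lt_const hη0).exists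
    refine ⟨m, ?_⟩
    have hm' : ν {u : E2 | (m:ℝ) ≤ ‖u‖}
        < ENNReal.ofReal (δ ^ q) * volume (ball (0:E2) 1) := hm
    rwa [hν, withDensity_apply _ (hSm m)] at hm'
  set R₁ : ℝ := max (n:ℝ) 1 with hR₁def
  have hR₁1 : (1:ℝ) ≤ R₁ := le_max_right _ _
  have hR₁0 : (0:ℝ) < R₁ := by linarith
  set A : Set E2 := {u : E2 | R₁ ≤ ‖u‖} with hAdef
  have hTA : (∫⁻ u in A, ENNReal.ofReal ‖fderiv ℝ v u‖ ^ q ∂volume)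
      < ENNReal.ofReal (δ ^ q) * volume (ball (0:E2) 1) := by
    refine lt_of_le_of_lt (lintegral_mono_set ?_) hn
    intro u hu
    have hu' : R₁ ≤ ‖u‖ := hu
    show (n:ℝ) ≤ ‖u‖
    exact le_trans (le_max_left _ _) hu'
  have hTA' : (∫⁻ u in A, ENNReal.ofReal ‖fderiv ℝ v u‖ ^ q ∂volume) ^ (1/q)
      ≤ ENNReal.ofReal δ * (volume (ball (0:E2) 1)) ^ (1/q) := by
    calc (∫⁻ u in A, ENNReal.ofReal ‖fderiv ℝ v u‖ ^ q ∂volume) ^ (1/q)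
        ≤ (ENNReal.ofReal (δ ^ q) * volume (ball (0:E2) 1)) ^ (1/q) :=
          ENNReal.rpow_le_rpow hTA.le (by positivity)
      _ = ENNReal.ofReal δ * (volume (ball (0:E2) 1)) ^ (1/q) := by
          rw [ENNReal.mul_rpow_of_nonneg _ _ (by positivity),
            ENNReal.ofReal_rpow_of_pos (by positivity)]
          congr 2
          rw [← Real.rpow_mul hδ.le, mul_one_div_cancel hq0.ne', Real.rpow_one]
  -- max of ‖v‖ on closed ball
  obtain ⟨z₀, hz₀mem, hz₀⟩ := (isCompact_closedBall (0:E2) R₁).exists_isMaxOn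
    ⟨0, mem_closedBall_self hR₁0.le⟩ (hv.continuous.norm.continuousOn)
  set M : ℝ := ‖v z₀‖ with hMdef
  have hM0 : 0 ≤ M := norm_nonneg _
  -- choose R₂ from rpow → ∞
  obtain ⟨R₂, hR₂⟩ := Filter.eventually_atTop.mp
    ((tendsto_rpow_atTop hexp).eventually_ge_atTop (2 * M / ε))
  refine ⟨max R₂ (2*R₁+1), lt_of_lt_of_le (by linarith) (le_max_right _ _), fun x hx => ?_⟩
  have hxR : 2*R₁ + 1 ≤ ‖x‖ := le_trans (le_max_right _ _) hx
  have hx0 : (0:ℝ) < ‖x‖ := by linarith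
  set ρ : ℝ := (‖x‖ - R₁)/2 with hρdef
  have hρ : 0 < ρ := by rw [hρdef]; linarith
  set p : E2 := (R₁/‖x‖) • x with hpdef
  set c : E2 := ((‖x‖ + R₁)/(2*‖x‖)) • x with hcdef
  have hnorm_smul : ∀ s : ℝ, ‖s • x‖ = |s| * ‖x‖ := fun s => by
    rw [norm_smul, Real.norm_eq_abs]
  have hpc : c - p = ((‖x‖ - R₁)/(2*‖x‖)) • x := by
    rw [hcdef, hpdef, ← sub_smul]
    congr 1
    field_simp
    ring
  have hsm1 : ∀ a : ℝ, x + a • x = (1 + a) • x := fun a => by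
    rw [add_smul, one_smul]
  have hxc : x - c = ((‖x‖ - R₁)/(2*‖x‖)) • x := by
    nth_rewrite 1 [show x = (1:ℝ) • x from (one_smul ℝ x).symm]
    rw [hcdef, ← sub_smul]
    congr 1
    field_simp
    ring
  have hcx : c - x = (-((‖x‖ - R₁)/(2*‖x‖))) • x := by
    rw [neg_smul, ← hxc, neg_sub]
  have hxR1 : R₁ < ‖x‖ := by linarith
  have hb : (0:ℝ) < (‖x‖ - R₁)/(2*‖x‖) := div_pos (by linarith) (by linarith)
  have hβ : ((‖x‖ - R₁)/(2*‖x‖)) * ‖x‖ = ρ := by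
    rw [hρdef]; field_simp
  have hcx_norm : ‖c - x‖ = ρ := by
    rw [norm_sub_rev, hxc, hnorm_smul, abs_of_pos hb, hβ]
  have hcp_norm : ‖c - p‖ = ρ := by
    rw [hpc, hnorm_smul, abs_of_pos hb, hβ]
  -- hull conditions
  have hhullx : ∀ t ∈ Set.Ioc (0:ℝ) 1, ball (x + t • (c - x)) (t * ρ) ⊆ A := by
    intro t ht u hu
    have hcen : x + t • (c - x) = (1 - t * ((‖x‖ - R₁)/(2*‖x‖))) • x := by
      rw [hcx, smul_smul, hsm1]
      congr 1
      ring
    have hble : t * ((‖x‖ - R₁)/(2*‖x‖)) ≤ (‖x‖ - R₁)/(2*‖x‖) := by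
      nlinarith [ht.2, ht.1]
    have hb1 : (‖x‖ - R₁)/(2*‖x‖) < 1 := by
      rw [div_lt_one (by positivity)]; linarith
    have hcen_norm : ‖x + t • (c - x)‖ = ‖x‖ - t * ρ := by
      rw [hcen, hnorm_smul, abs_of_pos (by linarith), ← hβ]
      field_simp
    have hdist : ‖x + t • (c - x)‖ - ‖u‖ ≤ t * ρ := by
      have h1 : dist u (x + t • (c - x)) < t * ρ := mem_ball.mp hu
      have h2 := norm_sub_norm_le (x + t • (c - x)) u
      rw [← dist_eq_norm, dist_comm] at h2
      linarith
    show R₁ ≤ ‖u‖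
    have htρ : t * ρ ≤ ρ := by nlinarith [ht.2, ht.1, hρ]
    rw [hcen_norm] at hdist
    have h2ρ : ‖x‖ - 2 * ρ = R₁ := by rw [hρdef]; ring
    nlinarith
  have hhullp : ∀ t ∈ Set.Ioc (0:ℝ) 1, ball (p + t • (c - p)) (t * ρ) ⊆ A := by
    intro t ht u hu
    have hcen : p + t • (c - p) = (R₁/‖x‖ + t * ((‖x‖ - R₁)/(2*‖x‖))) • x := by
      rw [hpc, smul_smul, hpdef, ← add_smul]
    have hcen_norm : ‖p + t • (c - p)‖ = R₁ + t * ρ := by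
      rw [hcen, hnorm_smul, abs_of_pos (add_pos (div_pos hR₁0 hx0) (mul_pos ht.1 hb)), ← hβ]
      field_simp
    have hdist : ‖p + t • (c - p)‖ - ‖u‖ ≤ t * ρ := by
      have h1 : dist u (p + t • (c - p)) < t * ρ := mem_ball.mp hu
      have h2 := norm_sub_norm_le (p + t • (c - p)) u
      rw [← dist_eq_norm, dist_comm] at h2
      linarith
    show R₁ ≤ ‖u‖
    rw [hcen_norm] at hdist
    linarith
  -- the two leg estimates
  have hlegx := leg hq hv hρ x c hhullx
  have hlegp := leg hq hv hρ p c hhullp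
  rw [hcx_norm] at hlegx
  rw [hcp_norm] at hlegp
  -- volume of the ball
  have hvol : volume (ball c ρ) = ENNReal.ofReal (ρ^2) * volume (ball (0:E2) 1) := by
    rw [Measure.addHaar_ball _ _ hρ.le, finrank_euclideanSpace_fin]
  -- triangle inequality through ball average
  have hm1 : Measurable fun w => ENNReal.ofReal ‖v x - v w‖ :=
    (ENNReal.continuous_ofReal.comp ((continuous_const.sub hv.continuous).norm)).measurable
  have htri : ENNReal.ofReal ‖v x - v p‖ * (ENNReal.ofReal (ρ^2) * volume (ball (0:E2) 1))
      ≤ (∫⁻ w in ball c ρ, ENNReal.ofReal ‖v x - v w‖ ∂volume)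
        + (∫⁻ w in ball c ρ, ENNReal.ofReal ‖v p - v w‖ ∂volume) := by
    calc ENNReal.ofReal ‖v x - v p‖ * (ENNReal.ofReal (ρ^2) * volume (ball (0:E2) 1))
        = ∫⁻ _ in ball c ρ, ENNReal.ofReal ‖v x - v p‖ ∂volume := by
          rw [setLIntegral_const, hvol]
      _ ≤ ∫⁻ w in ball c ρ,
            (ENNReal.ofReal ‖v x - v w‖ + ENNReal.ofReal ‖v p - v w‖) ∂volume := by
          apply setLIntegral_mono' measurableSet_ball
          intro w _
          rw [← ENNReal.ofReal_add (norm_nonneg _) (norm_nonneg _)]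
          apply ENNReal.ofReal_le_ofReal
          calc ‖v x - v p‖ = ‖(v x - v w) + (v w - v p)‖ := by
                congr 1
                abel
            _ ≤ ‖v x - v w‖ + ‖v w - v p‖ := norm_add_le _ _
            _ = ‖v x - v w‖ + ‖v p - v w‖ := by rw [norm_sub_rev (v w)]
      _ = _ := lintegral_add_left hm1 _
  -- bound each leg by an explicit constant times V
  have hVV : (volume (ball (0:E2) 1)) ^ (1/q) * (volume (ball (0:E2) 1)) ^ (1 - 1/q)
      = volume (ball (0:E2) 1) := by
    rw [← ENNReal.rpow_add _ _ hV0 hVtop]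
    norm_num
  have hlegbound : ∀ y : E2,
      (∫⁻ w in ball c ρ, ENNReal.ofReal ‖v y - v w‖ ∂volume) ≤
        ENNReal.ofReal (ρ + ρ) *
          ((∫⁻ u in A, ENNReal.ofReal ‖fderiv ℝ v u‖ ^ q ∂volume) ^ (1/q) *
            (volume (ball (0:E2) 1)) ^ (1 - 1/q) *
            ENNReal.ofReal (ρ ^ (2 - 2/q) * (q / (q - 2)))) →
      (∫⁻ w in ball c ρ, ENNReal.ofReal ‖v y - v w‖ ∂volume) ≤
        ENNReal.ofReal ((ρ + ρ) * δ * (ρ ^ (2 - 2/q) * (q / (q - 2)))) *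
          volume (ball (0:E2) 1) := by
    intro y h
    refine h.trans ?_
    calc ENNReal.ofReal (ρ + ρ) *
          ((∫⁻ u in A, ENNReal.ofReal ‖fderiv ℝ v u‖ ^ q ∂volume) ^ (1/q) *
            (volume (ball (0:E2) 1)) ^ (1 - 1/q) *
            ENNReal.ofReal (ρ ^ (2 - 2/q) * (q / (q - 2))))
        ≤ ENNReal.ofReal (ρ + ρ) *
          ((ENNReal.ofReal δ * (volume (ball (0:E2) 1)) ^ (1/q)) *
            (volume (ball (0:E2) 1)) ^ (1 - 1/q) *
            ENNReal.ofReal (ρ ^ (2 - 2/q) * (q / (q - 2)))) := by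
          gcongr
      _ = (ENNReal.ofReal (ρ + ρ) * ENNReal.ofReal δ *
            ENNReal.ofReal (ρ ^ (2 - 2/q) * (q / (q - 2)))) *
          ((volume (ball (0:E2) 1)) ^ (1/q) * (volume (ball (0:E2) 1)) ^ (1 - 1/q)) := by
          ring
      _ = ENNReal.ofReal ((ρ + ρ) * δ * (ρ ^ (2 - 2/q) * (q / (q - 2)))) *
          volume (ball (0:E2) 1) := by
          rw [hVV, ← ENNReal.ofReal_mul (by positivity), ← ENNReal.ofReal_mul (by positivity)]
  have hlegx' := hlegbound x hlegx
  have hlegp' := hlegbound p hlegp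
  -- real arithmetic identity
  have hρ2 : ρ ^ (2 - 2/q) = ρ ^ (1 - 2/q) * ρ := by
    nth_rewrite 3 [← Real.rpow_one ρ]
    rw [← Real.rpow_add hρ]
    ring_nf
  have hδCq : δ * (q / (q - 2)) = ε / 8 := by
    rw [hδdef]
    have h : q / (q - 2) ≠ 0 := by positivity
    field_simp
    ring
  have hreal : (ρ + ρ) * δ * (ρ ^ (2 - 2/q) * (q / (q - 2)))
        + (ρ + ρ) * δ * (ρ ^ (2 - 2/q) * (q / (q - 2)))
      = (ε/2 * ρ ^ (1 - 2/q)) * ρ^2 := by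
    rw [hρ2]
    have h8 : (ρ + ρ) * δ * (ρ ^ (1 - 2/q) * ρ * (q / (q - 2)))
        = 2 * ρ^2 * ρ ^ (1 - 2/q) * (δ * (q / (q - 2))) := by ring
    rw [h8, hδCq]
    ring
  -- combine
  have hcomb : ENNReal.ofReal ‖v x - v p‖ * (ENNReal.ofReal (ρ^2) * volume (ball (0:E2) 1))
      ≤ ENNReal.ofReal (ε/2 * ρ ^ (1 - 2/q)) *
          (ENNReal.ofReal (ρ^2) * volume (ball (0:E2) 1)) := by
    refine (htri.trans (add_le_add hlegx' hlegp')).trans (le_of_eq ?_)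
    rw [← add_mul, ← ENNReal.ofReal_add (by positivity) (by positivity), hreal,
      ENNReal.ofReal_mul (by positivity), mul_assoc]
  have hvp : ‖v x - v p‖ ≤ ε/2 * ρ ^ (1 - 2/q) := by
    have hne0 : ENNReal.ofReal (ρ^2) * volume (ball (0:E2) 1) ≠ 0 :=
      mul_ne_zero (by simp only [ne_eq, ENNReal.ofReal_eq_zero, not_le]; positivity) hV0
    have hnetop : ENNReal.ofReal (ρ^2) * volume (ball (0:E2) 1) ≠ ⊤ :=
      ENNReal.mul_ne_top ENNReal.ofReal_ne_top hVtop
    have := (ENNReal.mul_le_mul_iff_left hne0 hnetop).mp hcomb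
    exact (ENNReal.ofReal_le_ofReal_iff (by positivity)).mp this
  -- finish
  have hp_norm : ‖p‖ = R₁ := by
    rw [hpdef, hnorm_smul, abs_of_pos (div_pos hR₁0 hx0), div_mul_cancel₀ _ hx0.ne']
  have hvpM : ‖v p‖ ≤ M := hz₀ (by
    rw [mem_closedBall_zero_iff, hp_norm])
  have hMx : M ≤ ε/2 * ‖x‖ ^ (1 - 2/q) := by
    have h := hR₂ ‖x‖ (le_trans (le_max_left _ _) hx)
    rw [div_le_iff₀ hε] at h
    linarith
  have hρx : ρ ^ (1 - 2/q) ≤ ‖x‖ ^ (1 - 2/q) :=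
    Real.rpow_le_rpow hρ.le (by rw [hρdef]; linarith) hexp.le
  calc ‖v x‖ = ‖v p + (v x - v p)‖ := by
        congr 1
        abel
    _ ≤ ‖v p‖ + ‖v x - v p‖ := norm_add_le _ _
    _ ≤ M + ε/2 * ρ ^ (1 - 2/q) := add_le_add hvpM hvp
    _ ≤ ε/2 * ‖x‖ ^ (1 - 2/q) + ε/2 * ‖x‖ ^ (1 - 2/q) := by
        refine add_le_add hMx ?_
        have := mul_le_mul_of_nonneg_left hρx (by positivity : (0:ℝ) ≤ ε/2)
        linarith
    _ = ε * ‖x‖ ^ (1 - 2/q) := by ring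

end
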